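/- For every odd form α modulo exact forms, there exists a unique β (the special half of α) with β ⊕ β = α, where ⊕ is the modified addition. -/

import Mathlib

/-!  Abstract model of complex differential forms on a smooth manifold `M`:
`E` plays the role of the even-degree forms (a commutative ring under wedge),
`O` the odd-degree forms (an `E`-module, the action being the wedge product
of an even by an odd form), `d : O →+ E` the exterior derivative from odd to
even forms and `δ : E →+ O` the exterior derivative from even to odd forms
(so exact odd forms are those in the range of `δ`).  `α ∧ dβ` is written
`d β • α`, and `Λ = Ω^odd/dΩ^even` is modelled by working modulo `δ`-images. -/

variable {E O : Type*} [CommRing E] [AddCommGroup O] [Module E O]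

/-- Filtration: sums of elements of the form `(∏ d fᵢ) • y` with `k` factors. -/
def Fk (d : O →+ E) (k : ℕ) : AddSubgroup O :=
  AddSubgroup.closure {x | ∃ (f : Fin k → O) (y : O), x = (∏ i, d (f i)) • y}

lemma mem_Fk_zero (d : O →+ E) (x : O) : x ∈ Fk d 0 :=
  AddSubgroup.subset_closure ⟨Fin.elim0, x, by simp⟩

lemma Fk_smul (d : O →+ E) {k : ℕ} (e : E) {x : O} (hx : x ∈ Fk d k) :
    e • x ∈ Fk d k := by
  induction hx using AddSubgroup.closure_induction with
  | mem x hx =>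
    obtain ⟨f, y, rfl⟩ := hx
    exact AddSubgroup.subset_closure ⟨f, e • y, smul_comm e _ y⟩
  | zero => simpa using (Fk d k).zero_mem
  | add x y _ _ hx hy => simpa [smul_add] using (Fk d k).add_mem hx hy
  | neg x _ hx => simpa using (Fk d k).neg_mem hx

lemma delta_prod (d : O →+ E) (δ : E →+ O) (hdδ : ∀ x : O, δ (d x) = 0)
    (hδmul : ∀ a b : E, δ (a * b) = a • δ b + b • δ a) :
    ∀ (k : ℕ) (f : Fin k → O), δ (∏ i, d (f i)) = 0 := by
  intro k
  induction k with
  | zero =>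
    intro f
    have h := hδmul 1 1
    simp only [mul_one, one_smul] at h
    simpa using left_eq_add.mp h
  | succ n ih =>
    intro f
    rw [Fin.prod_univ_succ, hδmul, ih (fun i => f i.succ), hdδ]
    simp

lemma smul_d_mem (d : O →+ E) {k : ℕ} (b : O) {x : O} (hx : x ∈ Fk d k) :
    d b • x ∈ Fk d (k + 1) := by
  induction hx using AddSubgroup.closure_induction with
  | mem x hx =>
    obtain ⟨f, y, rfl⟩ := hx
    refine AddSubgroup.subset_closure ⟨Fin.cons b f, y, ?_⟩
    rw [Fin.prod_univ_succ]
    simp [mul_smul]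
  | zero => simpa using (Fk d (k+1)).zero_mem
  | add x y _ _ hx hy => simpa [smul_add] using (Fk d (k+1)).add_mem hx hy
  | neg x _ hx => simpa using (Fk d (k+1)).neg_mem hx

lemma dsmul_mem (d : O →+ E) (δ : E →+ O) (hdδ : ∀ x : O, δ (d x) = 0)
    (hsm : ∀ (e : E) (x : O), δ e = 0 → d (e • x) = e * d x)
    (hδmul : ∀ a b : E, δ (a * b) = a • δ b + b • δ a)
    {k : ℕ} {x : O} (hx : x ∈ Fk d k) (y : O) :
    d x • y ∈ Fk d (k + 1) := by
  induction hx using AddSubgroup.closure_induction with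
  | mem x hx =>
    obtain ⟨f, z, rfl⟩ := hx
    rw [hsm _ _ (delta_prod d δ hdδ hδmul k f)]
    refine AddSubgroup.subset_closure ⟨Fin.snoc f z, y, ?_⟩
    rw [Fin.prod_univ_castSucc]
    simp [mul_smul]
  | zero => simpa using (Fk d (k+1)).zero_mem
  | add a b _ _ ha hb => simpa [map_add, add_smul] using (Fk d (k+1)).add_mem ha hb
  | neg a _ ha => simpa [map_neg, neg_smul] using (Fk d (k+1)).neg_mem ha

lemma Fk_top_eq_zero (d : O →+ E) {N : ℕ}
    (hnilp : ∀ (f : Fin N → O) (x : O), (∏ i, d (f i)) • x = 0)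
    {x : O} (hx : x ∈ Fk d N) : x = 0 := by
  induction hx using AddSubgroup.closure_induction with
  | mem x hx => obtain ⟨f, y, rfl⟩ := hx; exact hnilp f y
  | zero => rfl
  | add a b _ _ ha hb => simp [ha, hb]
  | neg a _ ha => simp [ha]

/-- The modified addition `α ⊕ β := α + β + α ∧ dβ` on odd-degree forms. -/
def mAdd (d : O →+ E) (α β : O) : O := α + β + d β • α

/-- The iteration `b 0 = 0`, `b (n+1) = ½ (α - d(b n) • b n)`. -/
def iterHalf (d : O →+ E) (v : E) (α : O) : ℕ → O
  | 0 => 0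
  | n+1 => v • (α - d (iterHalf d v α n) • iterHalf d v α n)

/-- Special division by 2: every `α ∈ Λ` has a unique special half `β` with
`β ⊕ β = α` in `Λ` (i.e. up to exact forms).  The hypotheses are the usual
rules of graded differential calculus: `d² = 0` (`hδd`, `hdδ`), the Leibniz
rules `hsm` and `hδmul`, invertibility of `2`, and nilpotency of products of
`N` positive-degree forms (true on a finite-dimensional manifold). -/
theorem special_half_exists_unique (d : O →+ E) (δ : E →+ O) (N : ℕ)
    (h2 : Invertible (2 : E))
    (hδd : ∀ e : E, d (δ e) = 0)
    (hdδ : ∀ x : O, δ (d x) = 0)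
    (hsm : ∀ (e : E) (x : O), δ e = 0 → d (e • x) = e * d x)
    (hδmul : ∀ a b : E, δ (a * b) = a • δ b + b • δ a)
    (hnilp : ∀ (f : Fin N → O) (x : O), (∏ i, d (f i)) • x = 0)
    (α : O) :
    ∃ β : O, (∃ e : E, mAdd d β β = α + δ e) ∧
      ∀ β' : O, (∃ e : E, mAdd d β' β' = α + δ e) → ∃ e : E, β' = β + δ e := by
  set v : E := ⅟(2:E) with hv
  -- basic facts about δ on constants
  have hδ1 : δ (1:E) = 0 := by
    have h := hδmul 1 1
    simp only [mul_one, one_smul] at h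
    exact left_eq_add.mp h
  have hδ2 : δ (2:E) = 0 := by
    rw [(by norm_num : (2:E) = 1+1), map_add, hδ1, add_zero]
  have h2v : (2:E) • δ v = 0 := by
    have h := hδmul 2 v
    rw [mul_invOf_self, hδ1, hδ2] at h
    simpa using h.symm
  have hδv : δ v = 0 := by
    calc δ v = (v * 2) • δ v := by rw [invOf_mul_self, one_smul]
      _ = v • ((2:E) • δ v) := by rw [mul_smul]
      _ = 0 := by rw [h2v, smul_zero]
  have hvδ : ∀ w : E, v • δ w = δ (v * w) := by
    intro w
    rw [hδmul, hδv, smul_zero, add_zero]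
  -- the iteration
  set b : ℕ → O := iterHalf d v α with hbdef
  have hb : ∀ n, b (n+1) = v • (α - d (b n) • b n) := fun n => rfl
  have hγ : ∀ n, b (n+1) - b n ∈ Fk d n := by
    intro n
    induction n with
    | zero => exact mem_Fk_zero d _
    | succ n ih =>
      have key : b (n+2) - b (n+1)
          = v • (-(d (b (n+1) - b n) • b (n+1)) - d (b n) • (b (n+1) - b n)) := by
        rw [hb, hb, ← smul_sub]
        congr 1
        simp only [map_sub, sub_smul, smul_sub]
        abel
      rw [key]
      exact Fk_smul d v ((Fk d (n+1)).sub_mem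
        ((Fk d (n+1)).neg_mem (dsmul_mem d δ hdδ hsm hδmul ih _))
        (smul_d_mem d _ ih))
  have hstab : b (N+1) = b N := sub_eq_zero.mp (Fk_top_eq_zero d hnilp (hγ N))
  obtain ⟨β, hβ⟩ : ∃ β, β = b N := ⟨b N, rfl⟩
  have hfix : β = v • (α - d β • β) := by
    rw [hβ]
    conv_lhs => rw [← hstab]
    exact hb N
  have h2β : β + β = α - d β • β := by
    calc β + β = (2:E) • β := (two_smul E β).symm
      _ = (2:E) • (v • (α - d β • β)) := by rw [← hfix]
      _ = α - d β • β := by rw [smul_smul, mul_invOf_self, one_smul]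
  have hα : mAdd d β β = α := by
    rw [mAdd, h2β]; abel
  refine ⟨β, ⟨0, by rw [map_zero, add_zero, hα]⟩, ?_⟩
  rintro β' ⟨e', he'⟩
  have hdiff : β' + β' + d β' • β' - (β + β + d β • β) = δ e' := by
    have h : mAdd d β' β' - mAdd d β β = (α + δ e') - α := by rw [he', hα]
    simpa [mAdd] using h
  have key : ∀ k, ∃ u : E, β' - β - δ u ∈ Fk d k := by
    intro k
    induction k with
    | zero => exact ⟨0, by simpa using mem_Fk_zero d (β' - β)⟩
    | succ k ih =>
      obtain ⟨u, hu⟩ := ih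
      set φ : O := β' - β - δ u with hφ
      have hβ'eq : β' = β + δ u + φ := by rw [hφ]; abel
      have hdβ' : d β' = d β + d φ := by
        rw [hβ'eq, map_add, map_add, hδd u, add_zero]
      have h2g : (β' - β) + (β' - β) = δ e' - d φ • β' - d β • (β' - β) := by
        rw [smul_sub, ← hdiff, hdβ', add_smul]
        abel
      have h3 : β' - β = v • (δ e' - d φ • β' - d β • (β' - β)) := by
        calc β' - β = (v * 2) • (β' - β) := by rw [invOf_mul_self, one_smul]
          _ = v • ((2:E) • (β' - β)) := by rw [mul_smul]
          _ = v • ((β' - β) + (β' - β)) := by rw [two_smul]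
          _ = v • (δ e' - d φ • β' - d β • (β' - β)) := by rw [h2g]
      have hdbu : d β • δ u = δ (d β * u) := by
        rw [hδmul, hdδ β, smul_zero, add_zero]
      have h4 : d β • (β' - β) = d β • φ + δ (d β * u) := by
        have h5 : β' - β = φ + δ u := by rw [hφ]; abel
        rw [h5, smul_add, hdbu]
      refine ⟨v * e' - v * (d β * u), ?_⟩
      have hfin : β' - β - δ (v * e' - v * (d β * u))
          = v • (-(d φ • β') - d β • φ) := by
        rw [map_sub, ← hvδ e', ← hvδ (d β * u), h3, h4]
        simp only [smul_sub, smul_add, smul_neg]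
        abel
      rw [hfin]
      exact Fk_smul d v ((Fk d (k+1)).sub_mem
        ((Fk d (k+1)).neg_mem (dsmul_mem d δ hdδ hsm hδmul hu _))
        (smul_d_mem d _ hu))
  obtain ⟨u, hu⟩ := key N
  have h0 : β' - β - δ u = 0 := Fk_top_eq_zero d hnilp hu
  rw [sub_sub, sub_eq_zero] at h0
  exact ⟨u, h0⟩
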